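/- Let H be a Hilbert space and T : H → H a unitary operator. For every finite-dimensional subspace F ⊆ H and every n ∈ ℕ, the n-th delay subspace Fₙ satisfies h_apr(T, Fₙ) = h_apr(T, F). -/

import Mathlib

open MeasureTheory

/-- `H_apr(ω, δ)`: the minimal dimension of a finite-dimensional subspace `F ⊆ H` such that
every `x ∈ ω` is within distance `< δ` of some `y ∈ F`. -/
noncomputable def Hapr {H : Type*} [NormedAddCommGroup H] [InnerProductSpace ℂ H]
    (ω : Set H) (δ : ℝ) : ℕ :=
  sInf {d : ℕ | ∃ F : Submodule ℂ H, FiniteDimensional ℂ ↥F ∧ Module.finrank ℂ ↥F = d ∧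
    ∀ x ∈ ω, ∃ y ∈ F, ‖x - y‖ < δ}

/-- `h_apr(T, ω, δ) = lim_{n → ∞} (1/n) H_apr(⋃_{k=0}^{n-1} T^k ω, δ)` (the limit exists by
subadditivity, hence coincides with the limit superior used here). -/
noncomputable def haprδ {H : Type*} [NormedAddCommGroup H] [InnerProductSpace ℂ H]
    (T : H → H) (ω : Set H) (δ : ℝ) : ℝ :=
  Filter.limsup (fun n : ℕ => (Hapr (⋃ k < n, T^[k] '' ω) δ : ℝ) / n) Filter.atTop

/-- `h_apr(T, ω) = sup_{δ > 0} h_apr(T, ω, δ)`, the approximation entropy of `ω` with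
respect to `T`. -/
noncomputable def haprω {H : Type*} [NormedAddCommGroup H] [InnerProductSpace ℂ H]
    (T : H → H) (ω : Set H) : ℝ :=
  ⨆ (δ : ℝ) (_ : 0 < δ), haprδ T ω δ

/-- `h_apr(T, F)`: the approximation entropy of a subspace `F`, the supremum of `h_apr(T, ω)`
over all finite subsets `ω ⊆ F`. -/
noncomputable def haprSub {H : Type*} [NormedAddCommGroup H] [InnerProductSpace ℂ H]
    (T : H → H) (F : Submodule ℂ H) : ℝ :=
  ⨆ (ω : Finset H) (_ : (ω : Set H) ⊆ (F : Set H)), haprω T (ω : Set H)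

/-- The `n`-th delay subspace `Fₙ = span ⋃_{k=0}^{n} T^k F`. -/
noncomputable def delaySub {H : Type*} [NormedAddCommGroup H] [InnerProductSpace ℂ H]
    (T : H → H) (F : Submodule ℂ H) (n : ℕ) : Submodule ℂ H :=
  Submodule.span ℂ (⋃ k ≤ n, T^[k] '' (F : Set H))

open Filter Module Submodule

section Aux
variable {H : Type*} [NormedAddCommGroup H] [InnerProductSpace ℂ H]

/-- The linear map underlying a linear isometry equivalence. -/
noncomputable def Tl (T : H ≃ₗᵢ[ℂ] H) : H →ₗ[ℂ] H := (T.toLinearEquiv : H →ₗ[ℂ] H)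

lemma iter_eq (T : H ≃ₗᵢ[ℂ] H) (k : ℕ) : (⇑T)^[k] = ⇑(Tl T ^ k) := by
  have : ⇑T = ⇑(Tl T) := rfl
  rw [this, Module.End.coe_pow]

lemma Tl_norm (T : H ≃ₗᵢ[ℂ] H) (k : ℕ) (x : H) : ‖(Tl T ^ k) x‖ = ‖x‖ := by
  induction k with
  | zero => simp
  | succ k ih => rw [pow_succ', Module.End.mul_apply]; rw [show ‖(Tl T) ((Tl T ^ k) x)‖ = ‖(Tl T ^ k) x‖ from T.norm_map _, ih]

end Aux

section Aux2
variable {H : Type*} [NormedAddCommGroup H] [InnerProductSpace ℂ H]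

lemma Hapr_le_finrank {ω : Set H} {δ : ℝ} (hδ : 0 < δ) (G : Submodule ℂ H)
    [FiniteDimensional ℂ G] (hω : ω ⊆ (G : Set H)) : Hapr ω δ ≤ finrank ℂ G :=
  Nat.sInf_le ⟨G, ‹_›, rfl, fun x hx => ⟨x, hω hx, by simpa using hδ⟩⟩

lemma sup_map_fd (T : H ≃ₗᵢ[ℂ] H) (G : Submodule ℂ H) [FiniteDimensional ℂ G] (s : Finset ℕ) :
    FiniteDimensional ℂ ↥(s.sup fun k => Submodule.map (Tl T ^ k) G) ∧
      finrank ℂ ↥(s.sup fun k => Submodule.map (Tl T ^ k) G) ≤ s.card * finrank ℂ G := by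
  classical
  induction s using Finset.induction with
  | empty => refine ⟨?_, by simp [finrank_bot]⟩; show FiniteDimensional ℂ ↥(⊥ : Submodule ℂ H); infer_instance
  | insert a s' h ih =>
    rw [Finset.sup_insert]
    haveI := ih.1
    haveI : FiniteDimensional ℂ ↥(Submodule.map (Tl T ^ a) G) := inferInstance
    constructor
    · infer_instance
    · have h1 := Submodule.finrank_sup_add_finrank_inf_eq
        (Submodule.map (Tl T ^ a) G) (s'.sup fun k => Submodule.map (Tl T ^ k) G)
      have h2 : finrank ℂ ↥(Submodule.map (Tl T ^ a) G) ≤ finrank ℂ ↥G :=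
        Submodule.finrank_map_le _ _
      have h3 := ih.2
      rw [Finset.card_insert_of_notMem h]
      have := Nat.zero_le (finrank ℂ ↥(Submodule.map (Tl T ^ a) G ⊓ s'.sup fun k => Submodule.map (Tl T ^ k) G))
      nlinarith [h1, h2, h3]
end Aux2

section Aux3
variable {H : Type*} [NormedAddCommGroup H] [InnerProductSpace ℂ H]

lemma Hapr_orbit_nonempty (T : H ≃ₗᵢ[ℂ] H) {ω : Set H} (hω : ω.Finite) {δ : ℝ} (hδ : 0 < δ)
    (m : ℕ) : {d : ℕ | ∃ F : Submodule ℂ H, FiniteDimensional ℂ ↥F ∧ Module.finrank ℂ ↥F = d ∧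
      ∀ x ∈ ⋃ j < m, (⇑T)^[j] '' ω, ∃ y ∈ F, ‖x - y‖ < δ}.Nonempty := by
  have hfin : (⋃ j < m, (⇑T)^[j] '' ω).Finite :=
    Set.Finite.biUnion (Set.finite_Iio m) fun j _ => hω.image _
  haveI := FiniteDimensional.span_of_finite ℂ hfin
  exact ⟨finrank ℂ ↥(Submodule.span ℂ (⋃ j < m, (⇑T)^[j] '' ω)),
    Submodule.span ℂ _, ‹_›, rfl,
    fun x hx => ⟨x, Submodule.subset_span hx, by simpa using hδ⟩⟩

lemma Hapr_orbit_le (T : H ≃ₗᵢ[ℂ] H) {ω ω' : Set H} {δ' : ℝ} (hδ' : 0 < δ')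
    (hω' : ω'.Finite) (n : ℕ)
    (hdec : ∀ x ∈ ω, ∃ y : ℕ → H, (∀ k ≤ n, y k ∈ ω') ∧
      x = ∑ k ∈ Finset.range (n + 1), (Tl T ^ k) (y k))
    (m : ℕ) :
    Hapr (⋃ j < m, (⇑T)^[j] '' ω) ((n + 1) * δ') ≤ Hapr (⋃ j < m + n, (⇑T)^[j] '' ω') δ' := by
  classical
  obtain ⟨W, hWfd, hWrank, hWapp⟩ := Nat.sInf_mem (Hapr_orbit_nonempty T hω' hδ' (m + n))
  refine Nat.sInf_le ⟨W, hWfd, hWrank, ?_⟩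
  rintro z hz
  simp only [Set.mem_iUnion, Set.mem_image] at hz
  obtain ⟨j, hj, x, hx, rfl⟩ := hz
  obtain ⟨y, hy, hxy⟩ := hdec x hx
  have hz_eq : (⇑T)^[j] x = ∑ k ∈ Finset.range (n + 1), (Tl T ^ (j + k)) (y k) := by
    rw [iter_eq, hxy, map_sum]
    refine Finset.sum_congr rfl fun k _ => ?_
    rw [← Module.End.mul_apply, ← pow_add]
  have hchoice : ∀ k, k ∈ Finset.range (n + 1) →
      ∃ w, w ∈ W ∧ ‖(Tl T ^ (j + k)) (y k) - w‖ < δ' := by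
    intro k hk
    rw [Finset.mem_range, Nat.lt_succ_iff] at hk
    have hmem : (Tl T ^ (j + k)) (y k) ∈ ⋃ i < m + n, (⇑T)^[i] '' ω' := by
      refine Set.mem_iUnion.mpr ⟨j + k, Set.mem_iUnion.mpr ⟨by omega, ?_⟩⟩
      exact ⟨y k, hy k hk, by rw [iter_eq]⟩
    obtain ⟨w, hw, hw2⟩ := hWapp _ hmem
    exact ⟨w, hw, hw2⟩
  choose! w hw1 hw2 using hchoice
  refine ⟨∑ k ∈ Finset.range (n + 1), w k, Submodule.sum_mem W fun k hk => hw1 k hk, ?_⟩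
  rw [hz_eq, ← Finset.sum_sub_distrib]
  calc ‖∑ k ∈ Finset.range (n + 1), ((Tl T ^ (j + k)) (y k) - w k)‖
      ≤ ∑ k ∈ Finset.range (n + 1), ‖(Tl T ^ (j + k)) (y k) - w k‖ := norm_sum_le _ _
    _ < ∑ _k ∈ Finset.range (n + 1), δ' :=
        Finset.sum_lt_sum_of_nonempty (by simp) fun k hk => hw2 k hk
    _ = (n + 1) * δ' := by rw [Finset.sum_const, Finset.card_range, nsmul_eq_mul]; push_cast; ring

end Aux3

section Aux4
variable {H : Type*} [NormedAddCommGroup H] [InnerProductSpace ℂ H]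

lemma Hapr_orbit_le_mul (T : H ≃ₗᵢ[ℂ] H) {ω : Set H} {G : Submodule ℂ H}
    [FiniteDimensional ℂ G] (hω : ω ⊆ (G : Set H)) {δ : ℝ} (hδ : 0 < δ) (m : ℕ) :
    Hapr (⋃ j < m, (⇑T)^[j] '' ω) δ ≤ m * finrank ℂ G := by
  classical
  haveI := (sup_map_fd T G (Finset.range m)).1
  have hsub : (⋃ j < m, (⇑T)^[j] '' ω) ⊆
      ((Finset.range m).sup fun k => Submodule.map (Tl T ^ k) G : Submodule ℂ H) := by
    rintro z hz
    simp only [Set.mem_iUnion, Set.mem_image] at hz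
    obtain ⟨j, hj, x, hx, rfl⟩ := hz
    have : (⇑T)^[j] x ∈ Submodule.map (Tl T ^ j) G := ⟨x, hω hx, (by rw [iter_eq])⟩
    exact SetLike.le_def.mp (Finset.le_sup (f := fun k => Submodule.map (Tl T ^ k) G) (Finset.mem_range.mpr hj)) this
  calc Hapr (⋃ j < m, (⇑T)^[j] '' ω) δ
      ≤ finrank ℂ ↥((Finset.range m).sup fun k => Submodule.map (Tl T ^ k) G) :=
        Hapr_le_finrank hδ _ hsub
    _ ≤ m * finrank ℂ G := by
        simpa [Finset.card_range] using (sup_map_fd T G (Finset.range m)).2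

open Filter in
lemma limsup_div_le_limsup_div (a b : ℕ → ℝ) (c : ℕ) (C : ℝ)
    (ha0 : ∀ m, 0 ≤ a m) (hb0 : ∀ M, 0 ≤ b M)
    (hab : ∀ m, a m ≤ b (m + c)) (hbC : ∀ M, b M ≤ M * C) :
    limsup (fun m : ℕ => a m / m) atTop ≤ limsup (fun M : ℕ => b M / M) atTop := by
  have hC : 0 ≤ C := by
    have h1 := hbC 1
    have h2 := hb0 1
    push_cast at h1
    linarith
  set u : ℕ → ℝ := fun m => a m / m with hu
  set v : ℕ → ℝ := fun M => b M / M with hv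
  have hv0 : ∀ M, 0 ≤ v M := fun M => div_nonneg (hb0 M) (Nat.cast_nonneg M)
  have hvC : ∀ M, v M ≤ C := by
    intro M
    rcases Nat.eq_zero_or_pos M with h | h
    · simp [hv, h, hC]
    · have hMpos : (0 : ℝ) < M := by exact_mod_cast h
      rw [hv, div_le_iff₀ hMpos]
      calc b M ≤ M * C := hbC M
        _ = C * M := by ring
  have hbdd_v : IsBoundedUnder (· ≤ ·) atTop v := isBoundedUnder_of ⟨C, hvC⟩
  have hcobdd_u : IsCoboundedUnder (· ≤ ·) atTop u :=
    isCoboundedUnder_le_of_le atTop (fun m => div_nonneg (ha0 m) (Nat.cast_nonneg m))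
  have hL0 : 0 ≤ limsup v atTop :=
    le_limsup_of_frequently_le (Frequently.of_forall hv0) hbdd_v
  set L := limsup v atTop with hL
  -- show limsup u ≤ L + ε for every ε > 0
  have key : ∀ ε : ℝ, 0 < ε → limsup u atTop ≤ L + ε := by
    intro ε hε
    have h1 : ∀ᶠ M in atTop, v M < L + ε / 2 :=
      eventually_lt_of_limsup_lt (by linarith) hbdd_v
    obtain ⟨M₀, hM₀⟩ := eventually_atTop.mp h1
    obtain ⟨N, hN⟩ := exists_nat_ge (2 * C * c / ε)
    refine limsup_le_of_le hcobdd_u (eventually_atTop.mpr ⟨max (max M₀ N) 1, fun m hm => ?_⟩) 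
    have hm1 : 1 ≤ m := le_trans (le_max_right _ _) hm
    have hmM₀ : M₀ ≤ m + c := by
      have := le_trans (le_trans (le_max_left _ _) (le_max_left _ _)) hm
      omega
    have hmN : (N : ℝ) ≤ m := by
      exact_mod_cast le_trans (le_trans (le_max_right _ _) (le_max_left _ _)) hm
    have hmpos : (0 : ℝ) < m := by exact_mod_cast hm1
    have hmc : (0 : ℝ) < (m : ℝ) + c := by positivity
    have step1 : u m ≤ v (m + c) + C * c / m := by
      have e1 : u m ≤ b (m + c) / m := by
        show a m / (m : ℝ) ≤ b (m + c) / (m : ℝ)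
        gcongr
        exact hab m
      have e2 : b (m + c) / m = v (m + c) + v (m + c) * c / m := by
        rw [hv]
        push_cast
        field_simp
      have e3 : v (m + c) * c / m ≤ C * c / m := by
        gcongr
        exact hvC _
      linarith
    have step2 : v (m + c) < L + ε / 2 := hM₀ _ hmM₀
    have step3 : C * c / m ≤ ε / 2 := by
      rw [div_le_iff₀ hmpos]
      have h2 : 2 * C * c / ε ≤ m := le_trans hN hmN
      rw [div_le_iff₀ hε] at h2
      linarith
    linarith
  -- conclude
  by_contra hcon
  push_neg at hcon
  have := key ((limsup u atTop - L) / 2) (by linarith)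
  linarith
end Aux4



section Aux5
variable {H : Type*} [NormedAddCommGroup H] [InnerProductSpace ℂ H]

lemma delaySub_eq_sup (T : H ≃ₗᵢ[ℂ] H) (F : Submodule ℂ H) (n : ℕ) :
    delaySub ⇑T F n = (Finset.range (n + 1)).sup fun k => Submodule.map (Tl T ^ k) F := by
  rw [Finset.sup_eq_iSup, delaySub]
  have h1 : (⋃ k, ⋃ (_ : k ≤ n), (⇑T)^[k] '' (F : Set H)) =
      ⋃ k, ⋃ (_ : k ∈ Finset.range (n + 1)), (⇑T)^[k] '' (F : Set H) := by
    simp [Nat.lt_succ_iff]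
  rw [h1, Submodule.span_iUnion₂]
  refine iSup_congr fun k => iSup_congr fun _ => ?_
  rw [iter_eq, ← Submodule.map_span, Submodule.span_eq]

lemma delaySub_fd (T : H ≃ₗᵢ[ℂ] H) (F : Submodule ℂ H) [FiniteDimensional ℂ F] (n : ℕ) :
    FiniteDimensional ℂ ↥(delaySub ⇑T F n) := by
  rw [delaySub_eq_sup]
  exact (sup_map_fd T F (Finset.range (n + 1))).1

lemma delaySub_mem_decomp (T : H ≃ₗᵢ[ℂ] H) (F : Submodule ℂ H) (n : ℕ) {x : H}
    (hx : x ∈ delaySub ⇑T F n) :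
    ∃ y : ℕ → H, (∀ k, y k ∈ F) ∧ x = ∑ k ∈ Finset.range (n + 1), (Tl T ^ k) (y k) := by
  classical
  rw [delaySub_eq_sup, Finset.sup_eq_iSup] at hx
  rw [Submodule.mem_iSup_iff_exists_finsupp] at hx
  obtain ⟨f, hf, hsum⟩ := hx
  have hzero : ∀ k, k ∉ Finset.range (n + 1) → f k = 0 := by
    intro k hk
    have := hf k
    rw [iSup_neg hk] at this
    simpa using this
  have hchoice : ∀ k, ∃ y, y ∈ F ∧ (Tl T ^ k) y = f k := by
    intro k
    by_cases hk : k ∈ Finset.range (n + 1)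
    · have := hf k
      rw [iSup_pos hk] at this
      obtain ⟨y, hy, hy2⟩ := this
      exact ⟨y, hy, hy2⟩
    · exact ⟨0, zero_mem F, by rw [map_zero, hzero k hk]⟩
  choose y hy1 hy2 using hchoice
  refine ⟨y, hy1, ?_⟩
  have hss : f.support ⊆ Finset.range (n + 1) := by
    intro k hk
    by_contra hcon
    exact Finsupp.mem_support_iff.mp hk (hzero k hcon)
  rw [← hsum, Finsupp.sum_of_support_subset f hss (fun _ v => v) (fun _ _ => rfl)]
  exact Finset.sum_congr rfl fun k _ => (hy2 k).symm

lemma exists_omega' (T : H ≃ₗᵢ[ℂ] H) (F : Submodule ℂ H) (n : ℕ) (ω : Finset H)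
    (hω : (ω : Set H) ⊆ (delaySub ⇑T F n : Set H)) :
    ∃ ω' : Finset H, (ω' : Set H) ⊆ (F : Set H) ∧
      ∀ x ∈ (ω : Set H), ∃ y : ℕ → H, (∀ k ≤ n, y k ∈ (ω' : Set H)) ∧
        x = ∑ k ∈ Finset.range (n + 1), (Tl T ^ k) (y k) := by
  classical
  have hch : ∀ x : H, ∃ y : ℕ → H, x ∈ (ω : Set H) →
      (∀ k, y k ∈ F) ∧ x = ∑ k ∈ Finset.range (n + 1), (Tl T ^ k) (y k) := by
    intro x
    by_cases hx : x ∈ (ω : Set H)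
    · obtain ⟨y, h1, h2⟩ := delaySub_mem_decomp T F n (hω hx)
      exact ⟨y, fun _ => ⟨h1, h2⟩⟩
    · exact ⟨fun _ => 0, fun h => absurd h hx⟩
  choose Y hY using hch
  refine ⟨(ω ×ˢ Finset.range (n + 1)).image fun p => Y p.1 p.2, ?_, ?_⟩
  · rintro z hz
    simp only [Finset.coe_image, Set.mem_image, Finset.mem_coe, Finset.mem_product] at hz
    obtain ⟨⟨x, k⟩, ⟨hx, hk⟩, rfl⟩ := hz
    exact (hY x hx).1 k
  · intro x hx
    refine ⟨Y x, fun k hk => ?_, (hY x hx).2⟩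
    simp only [Finset.coe_image, Set.mem_image, Finset.mem_coe, Finset.mem_product]
    exact ⟨(x, k), ⟨hx, Finset.mem_range.mpr (by omega)⟩, rfl⟩

end Aux5


section Aux6
open Filter
variable {H : Type*} [NormedAddCommGroup H] [InnerProductSpace ℂ H]

lemma Hapr_orbit_div_le (T : H ≃ₗᵢ[ℂ] H) {ω : Set H} {G : Submodule ℂ H}
    [FiniteDimensional ℂ G] (hω : ω ⊆ (G : Set H)) {δ : ℝ} (hδ : 0 < δ) (m : ℕ) :
    (Hapr (⋃ j < m, (⇑T)^[j] '' ω) δ : ℝ) / m ≤ (finrank ℂ G : ℝ) := by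
  rcases Nat.eq_zero_or_pos m with h | h
  · subst h
    simp
  · have hmpos : (0 : ℝ) < m := by exact_mod_cast h
    rw [div_le_iff₀ hmpos]
    have := Hapr_orbit_le_mul T hω hδ m
    calc (Hapr (⋃ j < m, (⇑T)^[j] '' ω) δ : ℝ) ≤ (m * finrank ℂ G : ℕ) := by exact_mod_cast this
      _ = (finrank ℂ G : ℝ) * m := by push_cast; ring

lemma haprδ_le_finrank (T : H ≃ₗᵢ[ℂ] H) {ω : Set H} {G : Submodule ℂ H}
    [FiniteDimensional ℂ G] (hω : ω ⊆ (G : Set H)) {δ : ℝ} (hδ : 0 < δ) :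
    haprδ ⇑T ω δ ≤ (finrank ℂ G : ℝ) := by
  refine limsup_le_of_le (isCoboundedUnder_le_of_le atTop fun m => by positivity)
    (Eventually.of_forall fun m => Hapr_orbit_div_le T hω hδ m)

lemma haprδ_nonneg (T : H ≃ₗᵢ[ℂ] H) {ω : Set H} {G : Submodule ℂ H}
    [FiniteDimensional ℂ G] (hω : ω ⊆ (G : Set H)) {δ : ℝ} (hδ : 0 < δ) :
    0 ≤ haprδ ⇑T ω δ := by
  refine le_limsup_of_frequently_le (Frequently.of_forall fun m => by positivity)
    (isBoundedUnder_of ⟨(finrank ℂ G : ℝ), fun m => Hapr_orbit_div_le T hω hδ m⟩)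

lemma haprδ_le_haprδ' (T : H ≃ₗᵢ[ℂ] H) {G : Submodule ℂ H} [FiniteDimensional ℂ G]
    {ω ω' : Set H} (hω' : ω'.Finite) (hω'G : ω' ⊆ (G : Set H)) {δ' : ℝ} (hδ' : 0 < δ') (n : ℕ)
    (hdec : ∀ x ∈ ω, ∃ y : ℕ → H, (∀ k ≤ n, y k ∈ ω') ∧
      x = ∑ k ∈ Finset.range (n + 1), (Tl T ^ k) (y k)) :
    haprδ ⇑T ω ((n + 1) * δ') ≤ haprδ ⇑T ω' δ' := by
  refine limsup_div_le_limsup_div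
    (fun m => (Hapr (⋃ k < m, (⇑T)^[k] '' ω) ((n + 1) * δ') : ℝ))
    (fun M => (Hapr (⋃ k < M, (⇑T)^[k] '' ω') δ' : ℝ)) n (finrank ℂ G : ℝ)
    (fun m => by positivity) (fun M => by positivity) (fun m => ?_) (fun M => ?_)
  · exact_mod_cast Hapr_orbit_le T hδ' hω' n hdec m
  · calc (Hapr (⋃ k < M, (⇑T)^[k] '' ω') δ' : ℝ) ≤ ((M * finrank ℂ G : ℕ) : ℝ) :=
        Nat.cast_le.mpr (Hapr_orbit_le_mul T hω'G hδ' M)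
      _ = (M : ℝ) * (finrank ℂ G : ℝ) := by push_cast; ring

lemma iSup_prop_le_finrank (T : H ≃ₗᵢ[ℂ] H) {ω : Set H} {G : Submodule ℂ H}
    [FiniteDimensional ℂ G] (hω : ω ⊆ (G : Set H)) (δ : ℝ) :
    (⨆ _ : 0 < δ, haprδ ⇑T ω δ) ≤ (finrank ℂ G : ℝ) := by
  by_cases h : 0 < δ
  · rw [ciSup_pos h]
    exact haprδ_le_finrank T hω h
  · haveI : IsEmpty (0 < δ) := ⟨fun hp => h hp⟩
    rw [Real.iSup_of_isEmpty]
    positivity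

lemma haprω_le_finrank (T : H ≃ₗᵢ[ℂ] H) {ω : Set H} {G : Submodule ℂ H}
    [FiniteDimensional ℂ G] (hω : ω ⊆ (G : Set H)) :
    haprω ⇑T ω ≤ (finrank ℂ G : ℝ) :=
  ciSup_le fun δ => iSup_prop_le_finrank T hω δ

lemma bdd_above_inner (T : H ≃ₗᵢ[ℂ] H) {ω : Set H} {G : Submodule ℂ H}
    [FiniteDimensional ℂ G] (hω : ω ⊆ (G : Set H)) :
    BddAbove (Set.range fun δ : ℝ => ⨆ _ : 0 < δ, haprδ ⇑T ω δ) := by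
  refine ⟨(finrank ℂ G : ℝ), ?_⟩
  rintro _ ⟨δ, rfl⟩
  exact iSup_prop_le_finrank T hω δ

lemma haprω_nonneg (T : H ≃ₗᵢ[ℂ] H) {ω : Set H} {G : Submodule ℂ H}
    [FiniteDimensional ℂ G] (hω : ω ⊆ (G : Set H)) : 0 ≤ haprω ⇑T ω := by
  have h := le_ciSup (bdd_above_inner T hω) (0 : ℝ)
  haveI : IsEmpty ((0:ℝ) < 0) := ⟨fun hp => lt_irrefl _ hp⟩
  rwa [Real.iSup_of_isEmpty] at h

lemma haprδ_le_haprω (T : H ≃ₗᵢ[ℂ] H) {ω : Set H} {G : Submodule ℂ H}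
    [FiniteDimensional ℂ G] (hω : ω ⊆ (G : Set H)) {δ : ℝ} (hδ : 0 < δ) :
    haprδ ⇑T ω δ ≤ haprω ⇑T ω := by
  have h := le_ciSup (bdd_above_inner T hω) δ
  rwa [ciSup_pos hδ] at h

lemma haprω_le_haprSub (T : H ≃ₗᵢ[ℂ] H) {G : Submodule ℂ H} [FiniteDimensional ℂ G]
    (ω : Finset H) (hω : (ω : Set H) ⊆ (G : Set H)) :
    haprω ⇑T (ω : Set H) ≤ haprSub ⇑T G := by
  have bdd : BddAbove (Set.range fun ω : Finset H =>
      ⨆ _ : (ω : Set H) ⊆ (G : Set H), haprω ⇑T (ω : Set H)) := by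
    refine ⟨(finrank ℂ G : ℝ), ?_⟩
    rintro _ ⟨ω₀, rfl⟩
    dsimp only
    by_cases h : (ω₀ : Set H) ⊆ (G : Set H)
    · rw [ciSup_pos h]
      exact haprω_le_finrank T h
    · haveI : IsEmpty ((ω₀ : Set H) ⊆ (G : Set H)) := ⟨fun hp => h hp⟩
      rw [Real.iSup_of_isEmpty]
      positivity
  have h := le_ciSup bdd ω
  rw [ciSup_pos hω] at h
  exact h

lemma haprSub_nonneg (T : H ≃ₗᵢ[ℂ] H) (G : Submodule ℂ H) [FiniteDimensional ℂ G] :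
    0 ≤ haprSub ⇑T G := by
  have h1 : ((∅ : Finset H) : Set H) ⊆ (G : Set H) := by simp
  exact le_trans (haprω_nonneg T h1) (haprω_le_haprSub T ∅ h1)

lemma haprSub_le (T : H ≃ₗᵢ[ℂ] H) (G : Submodule ℂ H) {B : ℝ} (hB : 0 ≤ B)
    (h : ∀ ω : Finset H, (ω : Set H) ⊆ (G : Set H) → haprω ⇑T (ω : Set H) ≤ B) :
    haprSub ⇑T G ≤ B := by
  refine ciSup_le fun ω => ?_
  by_cases hω : (ω : Set H) ⊆ (G : Set H)
  · rw [ciSup_pos hω]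
    exact h ω hω
  · haveI : IsEmpty ((ω : Set H) ⊆ (G : Set H)) := ⟨fun hp => hω hp⟩
    rw [Real.iSup_of_isEmpty]
    exact hB

end Aux6

/-- For a unitary operator `T` on a Hilbert space `H`, every finite-dimensional
subspace `F ⊆ H` and every `n ∈ ℕ`, the `n`-th delay subspace `Fₙ` satisfies
`h_apr(T, Fₙ) = h_apr(T, F)`. -/
theorem stmt9 {H : Type*} [NormedAddCommGroup H] [InnerProductSpace ℂ H] [CompleteSpace H]
    (T : H ≃ₗᵢ[ℂ] H) (F : Submodule ℂ H) [FiniteDimensional ℂ ↥F] (n : ℕ) :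
    haprSub (⇑T) (delaySub (⇑T) F n) = haprSub (⇑T) F := by
  haveI hfdD : FiniteDimensional ℂ ↥(delaySub ⇑T F n) := delaySub_fd T F n
  have hFle : (F : Set H) ⊆ (delaySub ⇑T F n : Set H) := by
    intro x hx
    apply Submodule.subset_span
    exact Set.mem_iUnion.mpr ⟨0, Set.mem_iUnion.mpr ⟨Nat.zero_le n, ⟨x, hx, rfl⟩⟩⟩
  refine le_antisymm ?_ ?_
  · refine haprSub_le T _ (haprSub_nonneg T F) fun ω hω => ?_
    obtain ⟨ω', hω'F, hdec⟩ := exists_omega' T F n ω hω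
    refine ciSup_le fun δ => ?_
    by_cases hδ : 0 < δ
    · rw [ciSup_pos hδ]
      have hne : ((n : ℝ) + 1) ≠ 0 := by positivity
      have e : ((n : ℝ) + 1) * (δ / ((n : ℝ) + 1)) = δ := by field_simp
      have hδ' : 0 < δ / ((n : ℝ) + 1) := by positivity
      have h1 := haprδ_le_haprδ' T (G := F) (ω := (ω : Set H)) ω'.finite_toSet hω'F hδ' n hdec
      rw [e] at h1
      exact h1.trans ((haprδ_le_haprω T hω'F hδ').trans (haprω_le_haprSub T ω' hω'F))
    · haveI : IsEmpty (0 < δ) := ⟨fun hp => hδ hp⟩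
      rw [Real.iSup_of_isEmpty]
      exact haprSub_nonneg T F
  · refine haprSub_le T _ (haprSub_nonneg T _) fun ω hω => ?_
    exact haprω_le_haprSub T ω (hω.trans hFle)
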